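/- Let F be a long-tailed distribution function on the real line and set R(x) = −ln F̄(x). Suppose there exist γ < 1 and A′ < ∞ such that R(x) − R(x−y) ≤ γ R(y) + A′ for all x > 0 and all y ∈ [0, x/2]. If, in addition, the function x ↦ exp(−(1−γ) R(x)) is integrable over [0, ∞), then F is strong subexponential (F ∈ S*). -/

import Mathlib

open MeasureTheory ProbabilityTheory Filter Set

/-- A tail function `Fbar` is strong subexponential (`F ∈ 𝒮*`) if it is everywhere
positive, has finite mean `m = ∫₀^∞ F̄(y) dy` on the positive half-line, and
`∫₀ˣ F̄(x-y) F̄(y) dy ∼ 2 m F̄(x)` as `x → ∞`. -/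
def IsStrongSubexp (Fbar : ℝ → ℝ) : Prop :=
  (∀ x, 0 < Fbar x) ∧
  MeasureTheory.IntegrableOn Fbar (Set.Ioi 0) ∧
  Filter.Tendsto
    (fun x => (∫ y in (0:ℝ)..x, Fbar (x - y) * Fbar y) /
      (2 * (∫ y in Set.Ioi (0:ℝ), Fbar y) * Fbar x))
    Filter.atTop (nhds 1)

/-- **Proposition 2** (part of Theorem 3.30 in Foss–Korshunov–Zachary).
Let `F` be a long-tailed distribution function on the real line and `R(x) = -ln F̄(x)`.
If there are `γ < 1` and `A' < ∞` with `R(x) - R(x-y) ≤ γ R(y) + A'` for all `x > 0`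
and `y ∈ [0, x/2]`, and `exp(-(1-γ) R(x))` is integrable over `[0, ∞)`, then `F ∈ 𝒮*`. -/
theorem strong_subexp_criterion
    (F : ℝ → ℝ)
    -- F is a distribution function on ℝ
    (hF_mono : Monotone F)
    (hF_top : Tendsto F atTop (nhds 1)) (hF_bot : Tendsto F atBot (nhds 0))
    -- right-unbounded support: F̄(x) > 0 for all x
    (hF_pos : ∀ x, F x < 1)
    -- F is long-tailed
    (hF_long : Tendsto (fun x => (1 - F (x - 1)) / (1 - F x)) atTop (nhds 1))
    (γ A' : ℝ) (hγ : γ < 1)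
    (hR : ∀ x > (0:ℝ), ∀ y ∈ Set.Icc (0:ℝ) (x / 2),
      (-Real.log (1 - F x)) - (-Real.log (1 - F (x - y))) ≤ γ * (-Real.log (1 - F y)) + A')
    (hint : IntegrableOn (fun x => Real.exp (-(1 - γ) * (-Real.log (1 - F x)))) (Set.Ici 0)) :
    IsStrongSubexp (fun x => 1 - F x) := by
  set f : ℝ → ℝ := fun x => 1 - F x with hf_def
  set R : ℝ → ℝ := fun x => -Real.log (f x) with hR_def
  set G : ℝ → ℝ := fun x => Real.exp (-(1 - γ) * R x) with hG_def
  -- basic properties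
  have hf_pos : ∀ x, 0 < f x := fun x => sub_pos.mpr (hF_pos x)
  have hF_nonneg : ∀ x, 0 ≤ F x := by
    intro x
    refine le_of_tendsto hF_bot ?_
    filter_upwards [eventually_le_atBot x] with y hy using hF_mono hy
  have hf_le1 : ∀ x, f x ≤ 1 := by
    intro x; simp only [hf_def]; linarith [hF_nonneg x]
  have hf_anti : Antitone f := fun a b hab => by
    simp only [hf_def]; linarith [hF_mono hab]
  have hf_meas : Measurable f := measurable_const.sub hF_mono.measurable
  have hf_to0 : Tendsto f atTop (nhds 0) := by
    have := tendsto_const_nhds (x := (1:ℝ)) (f := atTop (α := ℝ)) |>.sub hF_top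
    simpa using this
  have hfR : ∀ x, f x = Real.exp (-(R x)) := by
    intro x; rw [hR_def]; simp [Real.exp_log (hf_pos x)]
  have hR0 : ∀ x, 0 ≤ R x := by
    intro x
    simp only [hR_def]
    exact neg_nonneg.mpr (Real.log_nonpos (hf_pos x).le (hf_le1 x))
  have hR_mono : Monotone R := by
    intro a b hab
    exact neg_le_neg (Real.log_le_log (hf_pos b) (hf_anti hab))
  have hR_top : Tendsto R atTop atTop := by
    have h1 : Tendsto f atTop (nhdsWithin 0 (Ioi 0)) :=
      tendsto_nhdsWithin_of_tendsto_nhds_of_eventually_within _ hf_to0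
        (Eventually.of_forall fun x => hf_pos x)
    have h2 : Tendsto (fun x => Real.log (f x)) atTop atBot :=
      Real.tendsto_log_nhdsGT_zero.comp h1
    simpa only [hR_def, Function.comp_def] using tendsto_neg_atBot_atTop.comp h2
  -- the case γ < 0 is contradictory
  rcases lt_or_ge γ 0 with hγ0 | hγ0
  · exfalso
    obtain ⟨t, ht1, ht2⟩ :=
      ((hR_top.eventually_ge_atTop ((A' + 1) / (-γ))).and (eventually_ge_atTop (1:ℝ))).exists
    have hx : (0:ℝ) < 2 * t := by linarith
    have hy : t ∈ Icc (0:ℝ) (2 * t / 2) := by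
      constructor <;> [linarith; linarith]
    have hkey := hR (2 * t) hx t hy
    have h2t : R t ≤ R (2 * t) := hR_mono (by linarith)
    have hmul : γ * R t ≤ γ * ((A' + 1) / (-γ)) :=
      mul_le_mul_of_nonpos_left ht1 hγ0.le
    have heq : γ * ((A' + 1) / (-γ)) = -(A' + 1) := by
      field_simp [hγ0.ne]
    rw [show 2 * t - t = t by ring] at hkey
    have hkey' : R (2 * t) - R t ≤ γ * R t + A' := hkey
    have s1 : (0:ℝ) ≤ γ * R t + A' := by linarith [h2t, hkey']
    have s2 : γ * R t ≤ -(A' + 1) := heq ▸ hmul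
    linarith [s1, s2]
  -- main case: 0 ≤ γ
  have hG_pos : ∀ x, 0 < G x := fun x => Real.exp_pos _
  have hG_le1 : ∀ x, G x ≤ 1 := by
    intro x
    rw [hG_def]
    refine Real.exp_le_one_iff.mpr ?_
    have h1 : 0 ≤ (1 - γ) * R x := mul_nonneg (by linarith) (hR0 x)
    linarith
  have hf_le_G : ∀ x, f x ≤ G x := by
    intro x
    rw [hfR x, hG_def]
    refine Real.exp_le_exp.mpr ?_
    nlinarith [hR0 x]
  have hG_meas : Measurable G := (((hf_meas.log).neg).const_mul (-(1 - γ))).exp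
  have hG_int0 : IntegrableOn G (Ioi 0) := hint.mono_set Ioi_subset_Ici_self
  have h_int_f : IntegrableOn f (Ioi 0) := by
    refine Integrable.mono hG_int0 hf_meas.aestronglyMeasurable ?_
    refine Eventually.of_forall fun x => ?_
    rw [Real.norm_eq_abs, Real.norm_eq_abs, abs_of_pos (hf_pos x), abs_of_pos (hG_pos x)]
    exact hf_le_G x
  set m : ℝ := ∫ y in Ioi (0:ℝ), f y with hm_def
  have hm_pos : 0 < m := by
    rw [hm_def]
    refine (setIntegral_pos_iff_support_of_nonneg_ae
      (Eventually.of_forall fun x => (hf_pos x).le) h_int_f).mpr ?_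
    have hsupp : Function.support f ∩ Ioi 0 = Ioi (0:ℝ) := by
      ext z
      simp [Function.support, (hf_pos z).ne']
    rw [hsupp, Real.volume_Ioi]
    exact ENNReal.zero_lt_top
  -- interval integrability of bounded measurable functions
  have hbd : ∀ g : ℝ → ℝ, Measurable g → (∀ z, 0 ≤ g z) → (∀ z, g z ≤ 1) →
      ∀ a b : ℝ, IntervalIntegrable g volume a b := by
    intro g hg h0 h1 a b
    rw [intervalIntegrable_iff]
    refine Measure.integrableOn_of_bounded (M := 1) ?_ hg.aestronglyMeasurable ?_
    · simp only [Set.uIoc]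
      exact measure_Ioc_lt_top.ne
    · refine Eventually.of_forall fun z => ?_
      rw [Real.norm_eq_abs, abs_of_nonneg (h0 z)]
      exact h1 z
  have hII : ∀ x a b : ℝ, IntervalIntegrable (fun y => f (x - y) * f y) volume a b := by
    intro x a b
    refine hbd _ ((hf_meas.comp (measurable_const.sub measurable_id)).mul hf_meas)
      (fun z => mul_nonneg (hf_pos _).le (hf_pos _).le) (fun z => ?_) a b
    calc f (x - z) * f z ≤ 1 * f z :=
          mul_le_mul_of_nonneg_right (hf_le1 _) (hf_pos z).le
      _ = f z := one_mul _
      _ ≤ 1 := hf_le1 z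
  have hII_f : ∀ a b : ℝ, IntervalIntegrable f volume a b :=
    hbd f hf_meas (fun z => (hf_pos z).le) hf_le1
  have hII_G : ∀ a b : ℝ, IntervalIntegrable G volume a b :=
    hbd G hG_meas (fun z => (hG_pos z).le) hG_le1
  -- the key pointwise bound
  have hkey : ∀ x, 0 < x → ∀ y ∈ Icc (0:ℝ) (x / 2),
      f (x - y) * f y ≤ Real.exp A' * f x * G y := by
    intro x hx y hy
    have h1 : R x - R (x - y) ≤ γ * R y + A' := hR x hx y hy
    have h2 : G y = Real.exp (-(1 - γ) * R y) := rfl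
    rw [hfR (x - y), hfR y, hfR x, h2, ← Real.exp_add, ← Real.exp_add, ← Real.exp_add]
    refine Real.exp_le_exp.mpr ?_
    nlinarith [hR0 y]
  -- symmetry
  have hsym : ∀ x : ℝ, (∫ y in (0:ℝ)..x, f (x - y) * f y)
      = 2 * ∫ y in (0:ℝ)..(x / 2), f (x - y) * f y := by
    intro x
    have h2 := intervalIntegral.integral_comp_sub_left (a := 0) (b := x / 2)
      (fun t => f (x - t) * f t) x
    simp only [sub_sub_cancel, sub_zero] at h2
    rw [show x - x / 2 = x / 2 by ring] at h2
    have h1 : (∫ y in (0:ℝ)..(x / 2), f (x - y) * f y)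
        = ∫ y in (x / 2)..x, f (x - y) * f y := by
      rw [← h2]
      exact intervalIntegral.integral_congr fun y _ => mul_comm _ _
    rw [two_mul]
    nth_rewrite 2 [h1]
    exact (intervalIntegral.integral_add_adjacent_intervals
      (hII x 0 (x / 2)) (hII x (x / 2) x)).symm
  -- long-tailedness at every step size
  have hLTnat : ∀ n : ℕ, Tendsto (fun x => f (x - n) / f x) atTop (nhds 1) := by
    intro n
    induction n with
    | zero =>
      have heq1 : (fun x : ℝ => f (x - (0:ℕ)) / f x) = fun _ => (1:ℝ) :=
        funext fun x => by simp [div_self (hf_pos x).ne']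
      rw [heq1]
      exact tendsto_const_nhds
    | succ n ih =>
      have hshift : Tendsto (fun x : ℝ => x - (n:ℝ)) atTop atTop := by
        simpa [sub_eq_add_neg] using
          tendsto_atTop_add_const_right atTop (-(n:ℝ)) (tendsto_id (α := ℝ))
      have h1 : Tendsto (fun x => f (x - (n:ℝ) - 1) / f (x - (n:ℝ))) atTop (nhds 1) :=
        hF_long.comp hshift
      have h2 := h1.mul ih
      rw [mul_one] at h2
      refine h2.congr fun x => ?_
      have hx : x - (n:ℝ) - 1 = x - ((n + 1 : ℕ) : ℝ) := by push_cast; ring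
      rw [div_mul_div_cancel₀ (hf_pos (x - (n:ℝ))).ne', hx]
  have hLT : ∀ h : ℝ, 0 ≤ h → Tendsto (fun x => f (x - h) / f x) atTop (nhds 1) := by
    intro h hh
    refine tendsto_of_tendsto_of_tendsto_of_le_of_le tendsto_const_nhds (hLTnat ⌈h⌉₊)
      (fun x => ?_) (fun x => ?_)
    · exact (one_le_div (hf_pos x)).mpr (hf_anti (by linarith))
    · have hle : x - (⌈h⌉₊ : ℝ) ≤ x - h := by linarith [Nat.le_ceil h]
      exact (div_le_div_iff_of_pos_right (hf_pos x)).mpr (hf_anti hle)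
  -- tail of the integral of G
  have hTail_eq : ∀ h : ℝ, 0 ≤ h →
      (∫ y in Ioi h, G y) = (∫ y in Ioi (0:ℝ), G y) - ∫ y in (0:ℝ)..h, G y := by
    intro h hh
    rw [intervalIntegral.integral_of_le hh]
    have hsplit : Ioc (0:ℝ) h ∪ Ioi h = Ioi 0 := Ioc_union_Ioi_eq_Ioi hh
    rw [← hsplit, setIntegral_union (Ioc_disjoint_Ioi le_rfl) measurableSet_Ioi
      (hG_int0.mono_set Ioc_subset_Ioi_self) (hG_int0.mono_set (Ioi_subset_Ioi hh))]
    ring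
  have hTail : Tendsto (fun h => ∫ y in Ioi h, G y) atTop (nhds 0) := by
    have h1 : Tendsto (fun h : ℝ => (∫ y in Ioi (0:ℝ), G y) - ∫ y in (0:ℝ)..h, G y)
        atTop (nhds ((∫ y in Ioi (0:ℝ), G y) - ∫ y in Ioi (0:ℝ), G y)) :=
      tendsto_const_nhds.sub (intervalIntegral_tendsto_integral_Ioi 0 hG_int0 tendsto_id)
    rw [sub_self] at h1
    refine h1.congr' ?_
    filter_upwards [eventually_ge_atTop (0:ℝ)] with h hh
    exact (hTail_eq h hh).symm
  -- partial means converge to m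
  have hS : Tendsto (fun x : ℝ => ∫ y in (0:ℝ)..(x / 2), f y) atTop (nhds m) :=
    intervalIntegral_tendsto_integral_Ioi 0 h_int_f (tendsto_id.atTop_div_const two_pos)
  have hS_le : ∀ b : ℝ, 0 ≤ b → (∫ y in (0:ℝ)..b, f y) ≤ m := by
    intro b hb
    rw [intervalIntegral.integral_of_le hb, hm_def]
    exact setIntegral_mono_set h_int_f (Eventually.of_forall fun x => (hf_pos x).le)
      Ioc_subset_Ioi_self.eventuallyLE
  -- the main limit
  have hmain : Tendsto (fun x => (∫ y in (0:ℝ)..x, f (x - y) * f y) / (2 * m * f x))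
      atTop (nhds 1) := by
    rw [tendsto_order]
    constructor
    · intro b hb
      have hS2 : Tendsto (fun x => (∫ y in (0:ℝ)..(x / 2), f y) / m) atTop (nhds 1) := by
        have := hS.div_const m
        rwa [div_self hm_pos.ne'] at this
      filter_upwards [hS2.eventually_const_lt hb, eventually_ge_atTop (0:ℝ)] with x hx1 hx0
      have hx2 : (0:ℝ) ≤ x / 2 := by linarith
      have hJ : f x * (∫ y in (0:ℝ)..(x / 2), f y) ≤ ∫ y in (0:ℝ)..(x / 2), f (x - y) * f y := by
        rw [← intervalIntegral.integral_const_mul]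
        refine intervalIntegral.integral_mono_on hx2 ((hII_f 0 (x / 2)).const_mul _)
          (hII x 0 (x / 2)) ?_
        intro y hy
        exact mul_le_mul_of_nonneg_right (hf_anti (sub_le_self x hy.1)) (hf_pos y).le
      rw [lt_div_iff₀ (mul_pos (mul_pos two_pos hm_pos) (hf_pos x))]
      have l1 : b * m < ∫ y in (0:ℝ)..(x / 2), f y := (lt_div_iff₀ hm_pos).mp hx1
      calc b * (2 * m * f x) = (b * m) * (2 * f x) := by ring
        _ < (∫ y in (0:ℝ)..(x / 2), f y) * (2 * f x) :=
            mul_lt_mul_of_pos_right l1 (mul_pos two_pos (hf_pos x))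
        _ = 2 * (f x * ∫ y in (0:ℝ)..(x / 2), f y) := by ring
        _ ≤ 2 * ∫ y in (0:ℝ)..(x / 2), f (x - y) * f y := by linarith
        _ = ∫ y in (0:ℝ)..x, f (x - y) * f y := (hsym x).symm
    · intro b hb
      have hδpos : 0 < (b - 1) / 2 := by linarith
      set δ : ℝ := (b - 1) / 2 with hδ
      have hexp : (0:ℝ) < Real.exp A' := Real.exp_pos _
      obtain ⟨h, hh_tail, hh1⟩ := ((hTail.eventually_lt_const
        (show (0:ℝ) < m * δ / Real.exp A' by positivity)).and
        (eventually_ge_atTop (1:ℝ))).exists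
      have hh0 : (0:ℝ) ≤ h := by linarith
      have hG_int_h : IntegrableOn G (Ioi h) :=
        hint.mono_set fun z hz => le_trans hh0 (le_of_lt hz)
      filter_upwards [(hLT h hh0).eventually_lt_const (show (1:ℝ) < 1 + δ by linarith),
        eventually_ge_atTop (2 * h)] with x hx1 hx2
      have hxpos : 0 < x := by linarith
      have hhx : h ≤ x / 2 := by linarith
      have hsplit : (∫ y in (0:ℝ)..(x / 2), f (x - y) * f y)
          = (∫ y in (0:ℝ)..h, f (x - y) * f y) + ∫ y in h..(x / 2), f (x - y) * f y :=
        (intervalIntegral.integral_add_adjacent_intervals (hII x 0 h) (hII x h (x / 2))).symm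
      have hpart1 : (∫ y in (0:ℝ)..h, f (x - y) * f y) ≤ f (x - h) * m := by
        have b1 : (∫ y in (0:ℝ)..h, f (x - y) * f y) ≤ ∫ y in (0:ℝ)..h, f (x - h) * f y := by
          refine intervalIntegral.integral_mono_on hh0 (hII x 0 h)
            ((hII_f 0 h).const_mul _) ?_
          intro y hy
          exact mul_le_mul_of_nonneg_right (hf_anti (by linarith [hy.2])) (hf_pos y).le
        rw [intervalIntegral.integral_const_mul] at b1
        exact b1.trans (mul_le_mul_of_nonneg_left (hS_le h hh0) (hf_pos _).le)
      have hpart2 : (∫ y in h..(x / 2), f (x - y) * f y)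
          ≤ Real.exp A' * f x * ∫ y in Ioi h, G y := by
        have b2 : (∫ y in h..(x / 2), f (x - y) * f y)
            ≤ ∫ y in h..(x / 2), Real.exp A' * f x * G y := by
          refine intervalIntegral.integral_mono_on hhx (hII x h (x / 2))
            ((hII_G h (x / 2)).const_mul _) ?_
          intro y hy
          exact hkey x hxpos y ⟨le_trans hh0 hy.1, hy.2⟩
        rw [intervalIntegral.integral_const_mul] at b2
        refine b2.trans (mul_le_mul_of_nonneg_left ?_
          (mul_nonneg hexp.le (hf_pos x).le))
        rw [intervalIntegral.integral_of_le hhx]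
        exact setIntegral_mono_set hG_int_h
          (Eventually.of_forall fun z => (hG_pos z).le) Ioc_subset_Ioi_self.eventuallyLE
      have hdenom : 0 < m * f x := mul_pos hm_pos (hf_pos x)
      have hfinal : (∫ y in (0:ℝ)..x, f (x - y) * f y) / (2 * m * f x)
          = (∫ y in (0:ℝ)..(x / 2), f (x - y) * f y) / (m * f x) := by
        rw [hsym x, show (2:ℝ) * m * f x = 2 * (m * f x) by ring,
          mul_div_mul_left _ _ two_ne_zero]
      rw [hfinal, hsplit, div_lt_iff₀ hdenom]
      have l2 : f (x - h) * m < (1 + δ) * (m * f x) := by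
        have := (div_lt_iff₀ (hf_pos x)).mp hx1
        nlinarith [hm_pos]
      have l3 : Real.exp A' * f x * (∫ y in Ioi h, G y)
          < Real.exp A' * f x * (m * δ / Real.exp A') := by
        refine mul_lt_mul_of_pos_left hh_tail (mul_pos hexp (hf_pos x))
      have l4 : Real.exp A' * f x * (m * δ / Real.exp A') = δ * (m * f x) := by
        field_simp
      calc (∫ y in (0:ℝ)..h, f (x - y) * f y) + ∫ y in h..(x / 2), f (x - y) * f y
          ≤ f (x - h) * m + Real.exp A' * f x * ∫ y in Ioi h, G y := add_le_add hpart1 hpart2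
        _ < (1 + δ) * (m * f x) + δ * (m * f x) := by
            rw [← l4]; exact add_lt_add l2 l3
        _ = b * (m * f x) := by rw [hδ]; ring
  exact ⟨hf_pos, h_int_f, hmain⟩
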